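/- arXiv:2410.20366 — 2 statements merged into one kernel-verified Lean document; each statement's English description precedes it below -/
import Mathlib

section
/- Let A be a two-block SBM adjacency matrix with parameters (N, p). Then for all indices i and j lying in different communities, E[(A³)_{ij}] = (N−1)(3N−5)p²(1−p) + (N−1)²(1−p)³ + (1−p) + 2(N−1)p(1−p) + 2(N−1)(1−p)². -/
open MeasureTheory ProbabilityTheory Matrix ENNReal Finset

/-- `i` and `j` lie in the same community, where the communities of `Fin (2*N)` are
`{0, …, N-1}` and `{N, …, 2N-1}`. -/
def sameCom (N : ℕ) (i j : Fin (2 * N)) : Prop := ((i : ℕ) < N ↔ (j : ℕ) < N)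

instance (N : ℕ) (i j : Fin (2 * N)) : Decidable (sameCom N i j) := by
  unfold sameCom; infer_instance

/-- The Bernoulli distribution on `ℝ` with success probability `q`:
mass `q` at `1` and mass `1 - q` at `0`. -/
noncomputable def bernoulliReal (q : ℝ) : Measure ℝ :=
  ENNReal.ofReal q • Measure.dirac (1 : ℝ) + ENNReal.ofReal (1 - q) • Measure.dirac (0 : ℝ)

lemma int_dirac_smul (c : ℝ≥0∞) (hc : c ≠ ⊤) (a : ℝ) :
    Integrable (fun x : ℝ => x) (c • Measure.dirac a) := by
  refine Integrable.smul_measure ⟨measurable_id.aestronglyMeasurable, ?_⟩ hc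
  simp [HasFiniteIntegral, lintegral_dirac]

lemma bern_int (q : ℝ) (h0 : 0 ≤ q) : ∫ x, x ∂(bernoulliReal q) = q := by
  unfold bernoulliReal
  rw [integral_add_measure (int_dirac_smul _ ENNReal.ofReal_ne_top _)
    (int_dirac_smul _ ENNReal.ofReal_ne_top _)]
  rw [integral_smul_measure, integral_smul_measure, integral_dirac, integral_dirac]
  simp [ENNReal.toReal_ofReal h0]

noncomputable def qv (N : ℕ) (p : ℝ) (a b : Fin (2*N)) : ℝ :=
  if sameCom N a b then p else 1 - p

noncomputable def cval (N : ℕ) (p : ℝ) (i j k l : Fin (2*N)) : ℝ :=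
  if k = i ∨ k = l ∨ l = j then 0
  else if k = j ∧ l = i then qv N p i j
  else if k = j then qv N p i j * qv N p j l
  else if l = i then qv N p i k * qv N p i j
  else qv N p i k * qv N p k l * qv N p l j

lemma card_com (N : ℕ) (i : Fin (2*N)) :
    (Finset.univ.filter (fun a => sameCom N i a)).card = N := by
  by_cases h : (i : ℕ) < N
  · refine Eq.trans (Finset.card_bij' (t := (Finset.univ : Finset (Fin N)))
      (fun a ha => (⟨(a : ℕ), ?_⟩ : Fin N))
      (fun b _ => (⟨(b : ℕ), by omega⟩ : Fin (2*N))) ?_ ?_ ?_ ?_) (by simp)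
    · replace ha := (Finset.mem_filter.1 ha).2; simp only [sameCom] at ha; omega
    · intro a ha; exact Finset.mem_univ _
    · intro b hb
      refine Finset.mem_filter.2 ⟨Finset.mem_univ _, ?_⟩
      show ((i:ℕ) < N ↔ _)
      simp only [Fin.val_mk]
      omega
    · intro a ha; apply Fin.ext; rfl
    · intro b hb; apply Fin.ext; rfl
  · refine Eq.trans (Finset.card_bij' (t := (Finset.univ : Finset (Fin N)))
      (fun a ha => (⟨(a : ℕ) - N, ?_⟩ : Fin N))
      (fun b _ => (⟨(b : ℕ) + N, by omega⟩ : Fin (2*N))) ?_ ?_ ?_ ?_) (by simp)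
    · simp only [Finset.mem_filter, sameCom] at ha
      have := a.isLt; omega
    · intro a ha; exact Finset.mem_univ _
    · intro b hb
      refine Finset.mem_filter.2 ⟨Finset.mem_univ _, ?_⟩
      show ((i:ℕ) < N ↔ _)
      simp only [Fin.val_mk]
      omega
    · intro a ha
      replace ha := (Finset.mem_filter.1 ha).2; simp only [sameCom] at ha
      apply Fin.ext; simp only [Fin.val_mk]; omega
    · intro b hb; apply Fin.ext; simp only [Fin.val_mk]; omega

lemma sum_two_vals {m : ℕ} {s : Finset (Fin m)} {f : Fin m → ℝ} {P : Fin m → Prop}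
    [DecidablePred P] {v w : ℝ}
    (hv : ∀ a ∈ s, P a → f a = v) (hw : ∀ a ∈ s, ¬ P a → f a = w) :
    ∑ a ∈ s, f a = (s.filter P).card * v + (s.filter (fun a => ¬ P a)).card * w := by
  rw [← Finset.sum_filter_add_sum_filter_not s P]
  rw [Finset.sum_congr rfl (fun a ha => hv a (Finset.mem_filter.1 ha).1 (Finset.mem_filter.1 ha).2),
      Finset.sum_congr rfl (fun a ha => hw a (Finset.mem_filter.1 ha).1 (Finset.mem_filter.1 ha).2),
      Finset.sum_const, Finset.sum_const, nsmul_eq_mul, nsmul_eq_mul]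

lemma sum_split2 {m : ℕ} (f : Fin m → ℝ) {a b : Fin m} (hab : a ≠ b) :
    ∑ x, f x = f a + f b + ∑ x ∈ (Finset.univ.erase a).erase b, f x := by
  rw [← Finset.add_sum_erase _ f (Finset.mem_univ a),
    ← Finset.add_sum_erase _ f (Finset.mem_erase.2 ⟨hab.symm, Finset.mem_univ b⟩), ← add_assoc]

lemma sum_split3 {m : ℕ} (f : Fin m → ℝ) {a b c : Fin m} (hab : a ≠ b) (hac : a ≠ c)
    (hbc : b ≠ c) :
    ∑ x, f x = f a + f b + f c + ∑ x ∈ ((Finset.univ.erase a).erase b).erase c, f x := by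
  rw [sum_split2 f hab, ← Finset.add_sum_erase _ f
    (Finset.mem_erase.2 ⟨hbc.symm, Finset.mem_erase.2 ⟨hac.symm, Finset.mem_univ c⟩⟩), ← add_assoc]

lemma mem_F {N : ℕ} {x a : Fin (2*N)} (h : sameCom N x a) :
    a ∈ Finset.univ.filter (fun l => sameCom N x l) :=
  Finset.mem_filter.2 ⟨Finset.mem_univ _, h⟩

lemma not_mem_F {N : ℕ} {x a : Fin (2*N)} (h : ¬ sameCom N x a) :
    a ∉ Finset.univ.filter (fun l => sameCom N x l) := by
  simp [Finset.mem_filter, h]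

lemma card_e2_TF {N : ℕ} {x a b : Fin (2*N)} (ha : sameCom N x a) (hb : ¬ sameCom N x b) :
    (((Finset.univ.erase a).erase b).filter (fun l => sameCom N x l)).card = N - 1 := by
  rw [Finset.filter_erase, Finset.filter_erase,
    Finset.erase_eq_of_notMem (fun h => hb (Finset.mem_filter.1 (Finset.mem_of_mem_erase h)).2),
    Finset.card_erase_of_mem (mem_F ha), card_com]

lemma card_e2_FT {N : ℕ} {x a b : Fin (2*N)} (ha : ¬ sameCom N x a) (hb : sameCom N x b) :
    (((Finset.univ.erase a).erase b).filter (fun l => sameCom N x l)).card = N - 1 := by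
  rw [Finset.filter_erase, Finset.filter_erase, Finset.erase_eq_of_notMem (not_mem_F ha),
    Finset.card_erase_of_mem (mem_F hb), card_com]

lemma card_e3_TFT {N : ℕ} {x a b c : Fin (2*N)} (ha : sameCom N x a) (hb : ¬ sameCom N x b)
    (hc : sameCom N x c) (hca : c ≠ a) :
    ((((Finset.univ.erase a).erase b).erase c).filter (fun l => sameCom N x l)).card = N - 2 := by
  have hca' : c ≠ b := fun h => hb (h ▸ hc)
  rw [Finset.filter_erase, Finset.card_erase_of_mem (Finset.mem_filter.2
    ⟨Finset.mem_erase.2 ⟨hca', Finset.mem_erase.2 ⟨hca, Finset.mem_univ _⟩⟩, hc⟩),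
    card_e2_TF ha hb]
  omega

lemma card_e3_FTF {N : ℕ} {x a b c : Fin (2*N)} (ha : ¬ sameCom N x a) (hb : sameCom N x b)
    (hc : ¬ sameCom N x c) :
    ((((Finset.univ.erase a).erase b).erase c).filter (fun l => sameCom N x l)).card = N - 1 := by
  rw [Finset.filter_erase, Finset.erase_eq_of_notMem
    (fun h => hc (Finset.mem_filter.1 h).2), card_e2_FT ha hb]

lemma card_e3_TFF {N : ℕ} {x a b c : Fin (2*N)} (ha : sameCom N x a) (hb : ¬ sameCom N x b)
    (hc : ¬ sameCom N x c) :
    ((((Finset.univ.erase a).erase b).erase c).filter (fun l => sameCom N x l)).card = N - 1 := by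
  rw [Finset.filter_erase, Finset.erase_eq_of_notMem
    (fun h => hc (Finset.mem_filter.1 h).2), card_e2_TF ha hb]

lemma card_e3_FTT {N : ℕ} {x a b c : Fin (2*N)} (ha : ¬ sameCom N x a) (hb : sameCom N x b)
    (hc : sameCom N x c) (hcb : c ≠ b) :
    ((((Finset.univ.erase a).erase b).erase c).filter (fun l => sameCom N x l)).card = N - 2 := by
  have hca : c ≠ a := fun h => ha (h ▸ hc)
  rw [Finset.filter_erase, Finset.card_erase_of_mem (Finset.mem_filter.2
    ⟨Finset.mem_erase.2 ⟨hcb, Finset.mem_erase.2 ⟨hca, Finset.mem_univ _⟩⟩, hc⟩),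
    card_e2_FT ha hb]
  omega

lemma filter_not_same {N : ℕ} {i j : Fin (2*N)} (hcom : ¬ sameCom N i j)
    (s : Finset (Fin (2*N))) :
    s.filter (fun a => ¬ sameCom N i a) = s.filter (fun a => sameCom N j a) :=
  Finset.filter_congr (fun a _ => by
    unfold sameCom at hcom ⊢
    constructor <;> (intro h; tauto))

lemma count_sum (N : ℕ) (hN : 1 ≤ N) (p : ℝ) (i j : Fin (2*N)) (hcom : ¬ sameCom N i j) :
    ∑ k : Fin (2*N), ∑ l : Fin (2*N), cval N p i j k l =
      ((N : ℝ) - 1) * (3 * N - 5) * p ^ 2 * (1 - p) + ((N : ℝ) - 1) ^ 2 * (1 - p) ^ 3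
        + (1 - p) + 2 * ((N : ℝ) - 1) * p * (1 - p) + 2 * ((N : ℝ) - 1) * (1 - p) ^ 2 := by
  classical
  have hij : i ≠ j := fun h => hcom (by rw [h]; exact Iff.rfl)
  have hii : sameCom N i i := Iff.rfl
  have hjj : sameCom N j j := Iff.rfl
  have hji : ¬ sameCom N j i := by unfold sameCom at hcom ⊢; tauto
  have hcast1 : ((N - 1 : ℕ) : ℝ) = (N : ℝ) - 1 := by
    rw [Nat.cast_sub hN]; norm_num
  -- inner sum for k = j
  have Gj : ∑ l : Fin (2*N), cval N p i j j l
      = (1 - p) + ((N:ℝ) - 1) * ((1-p)*(1-p)) + ((N:ℝ) - 1) * ((1-p)*p) := by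
    rw [sum_split2 _ hij]
    have e1 : cval N p i j j i = 1 - p := by
      simp [cval, qv, Ne.symm hij, hij, hcom]
    have e2 : cval N p i j j j = 0 := by simp [cval]
    have hv : ∀ l ∈ (Finset.univ.erase i).erase j, sameCom N i l →
        cval N p i j j l = (1-p)*(1-p) := by
      intro l hl hsl
      have hlj : l ≠ j := (Finset.mem_erase.1 hl).1
      have hli : l ≠ i := (Finset.mem_erase.1 (Finset.mem_erase.1 hl).2).1
      have hjl : ¬ sameCom N j l := by unfold sameCom at hcom hsl ⊢; tauto
      simp [cval, qv, Ne.symm hij, Ne.symm hlj, hlj, hli, hcom, hjl]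
    have hw : ∀ l ∈ (Finset.univ.erase i).erase j, ¬ sameCom N i l →
        cval N p i j j l = (1-p)*p := by
      intro l hl hsl
      have hlj : l ≠ j := (Finset.mem_erase.1 hl).1
      have hli : l ≠ i := (Finset.mem_erase.1 (Finset.mem_erase.1 hl).2).1
      have hjl : sameCom N j l := by unfold sameCom at hcom hsl ⊢; tauto
      simp [cval, qv, Ne.symm hij, Ne.symm hlj, hlj, hli, hcom, hjl]
    rw [e1, e2, sum_two_vals hv hw, card_e2_TF hii hcom, filter_not_same hcom _,
      card_e2_FT hji hjj, hcast1]
    ring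
  -- inner sum for k in community of i, k ≠ i, j
  have Gk1 : ∀ k ∈ (Finset.univ.erase i).erase j, sameCom N i k →
      ∑ l : Fin (2*N), cval N p i j k l
        = p*(1-p) + ((N:ℝ)-2)*(p*p*(1-p)) + ((N:ℝ)-1)*(p*(1-p)*p) := by
    intro k hk hsk
    have hkj : k ≠ j := (Finset.mem_erase.1 hk).1
    have hki : k ≠ i := (Finset.mem_erase.1 (Finset.mem_erase.1 hk).2).1
    have h2N : 2 ≤ N := by
      have hsub : ({i, k} : Finset (Fin (2*N))) ⊆
          Finset.univ.filter (fun l => sameCom N i l) := by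
        intro a ha
        rcases Finset.mem_insert.1 ha with h | h
        · subst h; exact mem_F hii
        · rw [Finset.mem_singleton.1 h]; exact mem_F hsk
      have := Finset.card_le_card hsub
      rwa [card_com, Finset.card_pair (Ne.symm hki)] at this
    have hcast2 : ((N - 2 : ℕ) : ℝ) = (N : ℝ) - 2 := by
      rw [Nat.cast_sub h2N]; norm_num
    rw [sum_split3 _ hij (Ne.symm hki) (Ne.symm hkj)]
    have e1 : cval N p i j k i = p * (1-p) := by
      simp [cval, qv, hki, hkj, hij, hcom, hsk]
    have e2 : cval N p i j k j = 0 := by simp [cval]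
    have e3 : cval N p i j k k = 0 := by simp [cval]
    have hv : ∀ l ∈ ((Finset.univ.erase i).erase j).erase k, sameCom N i l →
        cval N p i j k l = p*p*(1-p) := by
      intro l hl hsl
      have hlk : l ≠ k := (Finset.mem_erase.1 hl).1
      have hlj : l ≠ j := (Finset.mem_erase.1 (Finset.mem_erase.1 hl).2).1
      have hli : l ≠ i :=
        (Finset.mem_erase.1 (Finset.mem_erase.1 (Finset.mem_erase.1 hl).2).2).1
      have h1 : sameCom N k l := by unfold sameCom at hsk hsl ⊢; tauto
      have h2 : ¬ sameCom N l j := by unfold sameCom at hcom hsl ⊢; tauto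
      simp [cval, qv, hki, hkj, Ne.symm hlk, hlj, hli, hsk, h1, h2]
    have hw : ∀ l ∈ ((Finset.univ.erase i).erase j).erase k, ¬ sameCom N i l →
        cval N p i j k l = p*(1-p)*p := by
      intro l hl hsl
      have hlk : l ≠ k := (Finset.mem_erase.1 hl).1
      have hlj : l ≠ j := (Finset.mem_erase.1 (Finset.mem_erase.1 hl).2).1
      have hli : l ≠ i :=
        (Finset.mem_erase.1 (Finset.mem_erase.1 (Finset.mem_erase.1 hl).2).2).1
      have h1 : ¬ sameCom N k l := by unfold sameCom at hsk hsl ⊢; tauto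
      have h2 : sameCom N l j := by unfold sameCom at hcom hsl ⊢; tauto
      simp [cval, qv, hki, hkj, Ne.symm hlk, hlj, hli, hsk, h1, h2]
    have hjk : ¬ sameCom N j k := by unfold sameCom at hcom hsk ⊢; tauto
    rw [e1, e2, e3, sum_two_vals hv hw, card_e3_TFT hii hcom hsk hki,
      filter_not_same hcom _, card_e3_FTF hji hjj hjk, hcast1, hcast2]
    ring
  -- inner sum for k in community of j, k ≠ i, j
  have Gk2 : ∀ k ∈ (Finset.univ.erase i).erase j, ¬ sameCom N i k →
      ∑ l : Fin (2*N), cval N p i j k l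
        = (1-p)*(1-p) + ((N:ℝ)-1)*((1-p)*(1-p)*(1-p)) + ((N:ℝ)-2)*((1-p)*p*p) := by
    intro k hk hsk
    have hkj : k ≠ j := (Finset.mem_erase.1 hk).1
    have hki : k ≠ i := (Finset.mem_erase.1 (Finset.mem_erase.1 hk).2).1
    have hjk : sameCom N j k := by unfold sameCom at hcom hsk ⊢; tauto
    have h2N : 2 ≤ N := by
      have hsub : ({j, k} : Finset (Fin (2*N))) ⊆
          Finset.univ.filter (fun l => sameCom N j l) := by
        intro a ha
        rcases Finset.mem_insert.1 ha with h | h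
        · subst h; exact mem_F hjj
        · rw [Finset.mem_singleton.1 h]; exact mem_F hjk
      have := Finset.card_le_card hsub
      rwa [card_com, Finset.card_pair (Ne.symm hkj)] at this
    have hcast2 : ((N - 2 : ℕ) : ℝ) = (N : ℝ) - 2 := by
      rw [Nat.cast_sub h2N]; norm_num
    rw [sum_split3 _ hij (Ne.symm hki) (Ne.symm hkj)]
    have e1 : cval N p i j k i = (1-p) * (1-p) := by
      simp [cval, qv, hki, hkj, hij, hcom, hsk]
    have e2 : cval N p i j k j = 0 := by simp [cval]
    have e3 : cval N p i j k k = 0 := by simp [cval]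
    have hv : ∀ l ∈ ((Finset.univ.erase i).erase j).erase k, sameCom N i l →
        cval N p i j k l = (1-p)*(1-p)*(1-p) := by
      intro l hl hsl
      have hlk : l ≠ k := (Finset.mem_erase.1 hl).1
      have hlj : l ≠ j := (Finset.mem_erase.1 (Finset.mem_erase.1 hl).2).1
      have hli : l ≠ i :=
        (Finset.mem_erase.1 (Finset.mem_erase.1 (Finset.mem_erase.1 hl).2).2).1
      have h1 : ¬ sameCom N k l := by unfold sameCom at hsk hsl ⊢; tauto
      have h2 : ¬ sameCom N l j := by unfold sameCom at hcom hsl ⊢; tauto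
      simp [cval, qv, hki, hkj, Ne.symm hlk, hlj, hli, hsk, h1, h2]
    have hw : ∀ l ∈ ((Finset.univ.erase i).erase j).erase k, ¬ sameCom N i l →
        cval N p i j k l = (1-p)*p*p := by
      intro l hl hsl
      have hlk : l ≠ k := (Finset.mem_erase.1 hl).1
      have hlj : l ≠ j := (Finset.mem_erase.1 (Finset.mem_erase.1 hl).2).1
      have hli : l ≠ i :=
        (Finset.mem_erase.1 (Finset.mem_erase.1 (Finset.mem_erase.1 hl).2).2).1
      have h1 : sameCom N k l := by unfold sameCom at hsk hsl ⊢; tauto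
      have h2 : sameCom N l j := by unfold sameCom at hcom hsl ⊢; tauto
      simp [cval, qv, hki, hkj, Ne.symm hlk, hlj, hli, hsk, h1, h2]
    rw [e1, e2, e3, sum_two_vals hv hw, card_e3_TFF hii hcom hsk,
      filter_not_same hcom _, card_e3_FTT hji hjj hjk hkj, hcast1, hcast2]
    ring
  -- outer sum
  rw [sum_split2 _ hij]
  have G0 : ∑ l : Fin (2*N), cval N p i j i l = 0 :=
    Finset.sum_eq_zero (fun l _ => by simp [cval])
  rw [G0, Gj, sum_two_vals Gk1 Gk2, card_e2_TF hii hcom, filter_not_same hcom _,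
    card_e2_FT hji hjj, hcast1]
  ring


section EdgeAux
variable {N : ℕ}

def edg (a b : Fin (2*N)) (h : a ≠ b) : {e : Fin (2*N) × Fin (2*N) // e.1 < e.2} :=
  if hlt : a < b then ⟨(a,b), hlt⟩ else ⟨(b,a), (not_lt.1 hlt).lt_of_ne h.symm⟩

lemma edg_ne {a b c d : Fin (2*N)} (hab : a ≠ b) (hcd : c ≠ d)
    (h1 : ¬(a = c ∧ b = d)) (h2 : ¬(a = d ∧ b = c)) : edg a b hab ≠ edg c d hcd := by
  unfold edg
  split_ifs <;> intro h <;> (rw [Subtype.mk_eq_mk, Prod.mk.injEq] at h; tauto)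


end EdgeAux

/-- `A` is a two-block SBM adjacency matrix with parameters `(N, p)` under the measure `μ`. -/
structure IsSBM {Ω : Type*} [MeasurableSpace Ω] (μ : Measure Ω) (N : ℕ) (p : ℝ)
    (A : Ω → Matrix (Fin (2 * N)) (Fin (2 * N)) ℝ) : Prop where
  isProb : IsProbabilityMeasure μ
  symm : ∀ ω, (A ω)ᵀ = A ω
  diag : ∀ ω i, A ω i i = 0
  vals : ∀ ω i j, A ω i j = 0 ∨ A ω i j = 1
  meas : ∀ i j, Measurable fun ω => A ω i j
  indep : iIndepFun
    (fun (e : {e : Fin (2 * N) × Fin (2 * N) // e.1 < e.2}) ω => A ω e.1.1 e.1.2) μ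
  bern : ∀ i j, i < j →
    μ.map (fun ω => A ω i j) = bernoulliReal (if sameCom N i j then p else 1 - p)

theorem stmt8 {Ω : Type*} [MeasurableSpace Ω] (μ : Measure Ω) (N : ℕ) (hN : 1 ≤ N)
    (p : ℝ) (hp : 1 / 2 < p) (hp1 : p ≤ 1)
    (A : Ω → Matrix (Fin (2 * N)) (Fin (2 * N)) ℝ) (hA : IsSBM μ N p A)
    (i j : Fin (2 * N)) (hcom : ¬ sameCom N i j) :
    (∫ ω, ((A ω) ^ 3) i j ∂μ) =
      ((N : ℝ) - 1) * (3 * N - 5) * p ^ 2 * (1 - p) + ((N : ℝ) - 1) ^ 2 * (1 - p) ^ 3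
        + (1 - p) + 2 * ((N : ℝ) - 1) * p * (1 - p) + 2 * ((N : ℝ) - 1) * (1 - p) ^ 2 := by
  classical
  haveI := hA.isProb
  have hij : i ≠ j := fun h => hcom (by rw [h]; exact Iff.rfl)
  have hsym : ∀ ω a b, A ω a b = A ω b a := by
    intro ω a b
    have h := congrFun (congrFun (hA.symm ω) b) a
    simpa [Matrix.transpose_apply] using h
  have hidem : ∀ ω a b, A ω a b * A ω a b = A ω a b := by
    intro ω a b; rcases hA.vals ω a b with h | h <;> rw [h] <;> ring
  have hnorm : ∀ ω a b, ‖A ω a b‖ ≤ 1 := by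
    intro ω a b; rcases hA.vals ω a b with h | h <;> simp [h]
  have hintg : ∀ {f : Ω → ℝ}, Measurable f → (∀ ω, ‖f ω‖ ≤ 1) → Integrable f μ :=
    fun hm hb => Integrable.mono' (integrable_const 1) hm.aestronglyMeasurable (ae_of_all _ hb)
  have hint1 : ∀ a b, Integrable (fun ω => A ω a b) μ :=
    fun a b => hintg (hA.meas a b) (fun ω => hnorm ω a b)
  have hb2 : ∀ ω (a b c d : Fin (2*N)), ‖A ω a b * A ω c d‖ ≤ 1 := by
    intro ω a b c d
    rw [norm_mul]
    exact mul_le_one₀ (hnorm ω a b) (norm_nonneg _) (hnorm ω c d)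
  have hint2 : ∀ a b c d, Integrable (fun ω => A ω a b * A ω c d) μ :=
    fun a b c d => hintg ((hA.meas a b).mul (hA.meas c d)) (fun ω => hb2 ω a b c d)
  have hint3 : ∀ a b c d e f, Integrable (fun ω => A ω a b * A ω c d * A ω e f) μ := by
    intro a b c d e f
    refine hintg (((hA.meas a b).mul (hA.meas c d)).mul (hA.meas e f)) (fun ω => ?_)
    rw [norm_mul]
    exact mul_le_one₀ (hb2 ω a b c d) (norm_nonneg _) (hnorm ω e f)
  have hscs : ∀ a b : Fin (2*N), sameCom N a b ↔ sameCom N b a := by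
    intro a b; unfold sameCom; tauto
  have hq0 : ∀ a b : Fin (2*N), 0 ≤ (if sameCom N a b then p else 1 - p) := by
    intro a b; split <;> linarith
  have hexp : ∀ a b : Fin (2*N), a ≠ b → ∫ ω, A ω a b ∂μ = qv N p a b := by
    intro a b hab
    rcases lt_or_gt_of_ne hab with h | h
    · have key : ∫ ω, A ω a b ∂μ = ∫ x, x ∂(μ.map (fun ω => A ω a b)) :=
        (integral_map (hA.meas a b).aemeasurable aestronglyMeasurable_id).symm
      rw [key, hA.bern a b h, bern_int _ (hq0 a b)]; rfl
    · have hfe : (fun ω => A ω a b) = fun ω => A ω b a := funext fun ω => hsym ω a b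
      have key : ∫ ω, A ω b a ∂μ = ∫ x, x ∂(μ.map (fun ω => A ω b a)) :=
        (integral_map (hA.meas b a).aemeasurable aestronglyMeasurable_id).symm
      rw [hfe, key, hA.bern b a h, bern_int _ (hq0 b a)]
      unfold qv
      rw [if_congr (hscs b a) rfl rfl]
  have hedg : ∀ (a b : Fin (2*N)) (h : a ≠ b) (ω : Ω),
      A ω (edg a b h).1.1 (edg a b h).1.2 = A ω a b := by
    intro a b h ω
    unfold edg
    split_ifs with hlt
    · rfl
    · exact hsym ω b a
  have hXexp : ∀ (a b : Fin (2*N)) (h : a ≠ b),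
      ∫ ω, A ω (edg a b h).1.1 (edg a b h).1.2 ∂μ = qv N p a b := by
    intro a b h
    rw [funext (hedg a b h)]
    exact hexp a b h
  have hmeasX : ∀ e : {e : Fin (2 * N) × Fin (2 * N) // e.1 < e.2},
      Measurable fun ω => A ω e.1.1 e.1.2 := fun e => hA.meas _ _
  -- per-term expectation
  have hterm : ∀ k l : Fin (2*N),
      ∫ ω, A ω i k * A ω k l * A ω l j ∂μ = cval N p i j k l := by
    intro k l
    by_cases hki : k = i
    · subst hki; simp [cval, hA.diag]
    by_cases hkl : k = l
    · subst hkl; simp [cval, hA.diag]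
    by_cases hlj : l = j
    · subst hlj; simp [cval, hA.diag]
    by_cases hkj : k = j
    · replace hkj := hkj.symm; subst hkj
      by_cases hli : l = i
      · replace hli := hli.symm; subst hli
        have hfe : (fun ω => A ω i j * A ω j i * A ω i j) = fun ω => A ω i j := by
          funext ω
          rw [hsym ω j i, hidem ω i j, hidem ω i j]
        rw [hfe, hexp i j hij]
        simp [cval, hij, Ne.symm hij]
      · -- k = j, l ∉ {i, j}
        have h12 : edg i j hij ≠ edg j l hkl :=
          edg_ne hij hkl (fun h => hij h.1) (fun h => hli (h.1.symm))
        have hind := (hA.indep.indepFun h12).integral_mul_eq_mul_integral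
          (hint1 (edg i j hij).1.1 (edg i j hij).1.2).aestronglyMeasurable
          (hint1 (edg j l hkl).1.1 (edg j l hkl).1.2).aestronglyMeasurable
        have hfe : (fun ω => A ω i j * A ω j l * A ω l j)
            = fun ω => A ω (edg i j hij).1.1 (edg i j hij).1.2
                * A ω (edg j l hkl).1.1 (edg j l hkl).1.2 := by
          funext ω
          rw [hedg, hedg, hsym ω l j, mul_assoc, hidem]
        rw [hfe]
        have : ∫ ω, A ω (edg i j hij).1.1 (edg i j hij).1.2
            * A ω (edg j l hkl).1.1 (edg j l hkl).1.2 ∂μ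
            = (∫ ω, A ω (edg i j hij).1.1 (edg i j hij).1.2 ∂μ)
            * ∫ ω, A ω (edg j l hkl).1.1 (edg j l hkl).1.2 ∂μ := hind
        rw [this, hXexp, hXexp]
        simp [cval, hij, Ne.symm hij, hkl, hli, hlj]
    by_cases hli : l = i
    · replace hli := hli.symm; subst hli
      -- l = i, k ∉ {i, j}
      have hik : i ≠ k := Ne.symm hki
      have h12 : edg i k hik ≠ edg i j hij :=
        edg_ne hik hij (fun h => hkj h.2) (fun h => hij h.1)
      have hind := (hA.indep.indepFun h12).integral_mul_eq_mul_integral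
        (hint1 (edg i k hik).1.1 (edg i k hik).1.2).aestronglyMeasurable
        (hint1 (edg i j hij).1.1 (edg i j hij).1.2).aestronglyMeasurable
      have hfe : (fun ω => A ω i k * A ω k i * A ω i j)
          = fun ω => A ω (edg i k hik).1.1 (edg i k hik).1.2
              * A ω (edg i j hij).1.1 (edg i j hij).1.2 := by
        funext ω
        rw [hedg, hedg, hsym ω k i, hidem]
      rw [hfe]
      have : ∫ ω, A ω (edg i k hik).1.1 (edg i k hik).1.2
          * A ω (edg i j hij).1.1 (edg i j hij).1.2 ∂μ
          = (∫ ω, A ω (edg i k hik).1.1 (edg i k hik).1.2 ∂μ)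
          * ∫ ω, A ω (edg i j hij).1.1 (edg i j hij).1.2 ∂μ := hind
      rw [this, hXexp, hXexp]
      simp [cval, hki, hkj, hij, hkl]
    · -- generic case: i, j, k, l pairwise distinct
      have hik : i ≠ k := Ne.symm hki
      have hil : i ≠ l := Ne.symm hli
      have h12 : edg i k hik ≠ edg k l hkl :=
        edg_ne hik hkl (fun h => hik h.1) (fun h => hil h.1)
      have h13 : edg i k hik ≠ edg l j hlj :=
        edg_ne hik hlj (fun h => hil h.1) (fun h => hij h.1)
      have h23 : edg k l hkl ≠ edg l j hlj :=
        edg_ne hkl hlj (fun h => hkl h.1) (fun h => hkj h.1)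
      have hmul := hA.indep.indepFun_mul_left hmeasX
        (edg i k hik) (edg k l hkl) (edg l j hlj) h13 h23
      have hind3 := hmul.integral_mul_eq_mul_integral
        (hint2 (edg i k hik).1.1 (edg i k hik).1.2 (edg k l hkl).1.1 (edg k l hkl).1.2).aestronglyMeasurable
        (hint1 (edg l j hlj).1.1 (edg l j hlj).1.2).aestronglyMeasurable
      have hind2 := (hA.indep.indepFun h12).integral_mul_eq_mul_integral
        (hint1 (edg i k hik).1.1 (edg i k hik).1.2).aestronglyMeasurable
        (hint1 (edg k l hkl).1.1 (edg k l hkl).1.2).aestronglyMeasurable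
      have hfe : (fun ω => A ω i k * A ω k l * A ω l j)
          = fun ω => A ω (edg i k hik).1.1 (edg i k hik).1.2
              * A ω (edg k l hkl).1.1 (edg k l hkl).1.2
              * A ω (edg l j hlj).1.1 (edg l j hlj).1.2 := by
        funext ω
        rw [hedg, hedg, hedg]
      rw [hfe]
      have e3 : ∫ ω, A ω (edg i k hik).1.1 (edg i k hik).1.2
          * A ω (edg k l hkl).1.1 (edg k l hkl).1.2
          * A ω (edg l j hlj).1.1 (edg l j hlj).1.2 ∂μ
          = (∫ ω, A ω (edg i k hik).1.1 (edg i k hik).1.2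
              * A ω (edg k l hkl).1.1 (edg k l hkl).1.2 ∂μ)
          * ∫ ω, A ω (edg l j hlj).1.1 (edg l j hlj).1.2 ∂μ := hind3
      have e2 : ∫ ω, A ω (edg i k hik).1.1 (edg i k hik).1.2
          * A ω (edg k l hkl).1.1 (edg k l hkl).1.2 ∂μ
          = (∫ ω, A ω (edg i k hik).1.1 (edg i k hik).1.2 ∂μ)
          * ∫ ω, A ω (edg k l hkl).1.1 (edg k l hkl).1.2 ∂μ := hind2
      rw [e3, e2, hXexp, hXexp, hXexp]
      simp [cval, hki, hkj, hkl, hli, hlj]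
  -- expand the matrix power
  have hpow : (fun ω => ((A ω) ^ 3) i j)
      = fun ω => ∑ k : Fin (2*N), ∑ l : Fin (2*N), A ω i l * A ω l k * A ω k j := by
    funext ω
    rw [pow_succ, pow_two, Matrix.mul_apply]
    refine Finset.sum_congr rfl fun k _ => ?_
    rw [Matrix.mul_apply, Finset.sum_mul]
  rw [hpow]
  rw [integral_finset_sum _ (fun k _ =>
    integrable_finset_sum _ (fun l _ => hint3 i l l k k j))]
  have : ∀ k : Fin (2*N), ∫ ω, ∑ l : Fin (2*N), A ω i l * A ω l k * A ω k j ∂μ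
      = ∑ l : Fin (2*N), cval N p i j l k := by
    intro k
    rw [integral_finset_sum _ (fun l _ => hint3 i l l k k j)]
    exact Finset.sum_congr rfl fun l _ => hterm l k
  rw [Finset.sum_congr rfl (fun k _ => this k), Finset.sum_comm]
  exact count_sum N hN p i j hcom
end

section
/- Let A be a two-block SBM adjacency matrix with parameters (N, p) and let i ≠ j be distinct indices. Then E[A_{ij}·(A²)_{ij}] = p·(N(1 − 2p + 2p²) − 2p²) if i and j lie in the same community, and E[A_{ij}·(A²)_{ij}] = 2(N−1)p(1−p)² if i and j lie in different communities. -/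
open MeasureTheory ProbabilityTheory Matrix

lemma integral_bernoulliReal {q : ℝ} (h0 : 0 ≤ q) (h1 : q ≤ 1) :
    ∫ x, x ∂ bernoulliReal q = q := by
  have hid : ∀ a : ℝ, Integrable (fun x : ℝ => x) (Measure.dirac a) := by
    intro a
    refine ⟨measurable_id.aestronglyMeasurable, ?_⟩
    rw [HasFiniteIntegral, lintegral_dirac]
    exact ENNReal.coe_lt_top
  have hi1 : Integrable (fun x : ℝ => x) (ENNReal.ofReal q • Measure.dirac (1 : ℝ)) :=
    (hid 1).smul_measure ENNReal.ofReal_ne_top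
  have hi0 : Integrable (fun x : ℝ => x) (ENNReal.ofReal (1 - q) • Measure.dirac (0 : ℝ)) :=
    (hid 0).smul_measure ENNReal.ofReal_ne_top
  rw [bernoulliReal, integral_add_measure hi1 hi0, integral_smul_measure, integral_smul_measure,
    integral_dirac, integral_dirac, ENNReal.toReal_ofReal h0,
    ENNReal.toReal_ofReal (by linarith)]
  simp

lemma pairEq {α : Type*} [LinearOrder α] {a b c d : α} (h1 : a ⊓ b = c ⊓ d)
    (h2 : a ⊔ b = c ⊔ d) : (a = c ∧ b = d) ∨ (a = d ∧ b = c) := by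
  rcases le_total a b with hab | hab <;> rcases le_total c d with hcd | hcd <;>
    simp only [inf_of_le_left, inf_of_le_right, sup_of_le_left, sup_of_le_right, min_eq_left, min_eq_right, max_eq_left, max_eq_right,
      hab, hcd] at h1 h2 <;> tauto

/-- Edge probability as a function of natural-number indices. -/
noncomputable def Qv (N : ℕ) (p : ℝ) (a b : ℕ) : ℝ := if ((a < N) ↔ (b < N)) then p else 1 - p

/-- Edge probability. -/
noncomputable def qval (N : ℕ) (p : ℝ) (a b : Fin (2 * N)) : ℝ :=
  if sameCom N a b then p else 1 - p

lemma qval_eq_Qv (N : ℕ) (p : ℝ) (a b : Fin (2 * N)) :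
    qval N p a b = Qv N p (a : ℕ) (b : ℕ) := rfl

section SBM

variable {Ω : Type*} [MeasurableSpace Ω] {μ : Measure Ω} {N : ℕ} {p : ℝ}
  {A : Ω → Matrix (Fin (2 * N)) (Fin (2 * N)) ℝ}

lemma IsSBM.comm (hA : IsSBM μ N p A) (ω : Ω) (a b : Fin (2 * N)) :
    A ω a b = A ω b a := by
  conv_lhs => rw [← hA.symm ω]
  rw [Matrix.transpose_apply]

lemma IsSBM.map_eq (hA : IsSBM μ N p A) {a b : Fin (2 * N)} (hab : a ≠ b) :
    μ.map (fun ω => A ω a b) = bernoulliReal (qval N p a b) := by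
  rcases lt_or_gt_of_ne hab with h | h
  · exact hA.bern a b h
  · have he : (fun ω => A ω a b) = fun ω => A ω b a := funext fun ω => hA.comm ω a b
    rw [he, hA.bern b a h]
    unfold qval sameCom
    exact congrArg bernoulliReal (if_congr Iff.comm rfl rfl)

lemma IsSBM.exp_entry (hA : IsSBM μ N p A) (hp : 1 / 2 < p) (hp1 : p ≤ 1)
    {a b : Fin (2 * N)} (hab : a ≠ b) :
    ∫ ω, A ω a b ∂μ = qval N p a b := by
  have h := integral_map (μ := μ) (φ := fun ω => A ω a b) (hA.meas a b).aemeasurable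
    (f := fun x : ℝ => x) measurable_id.aestronglyMeasurable
  rw [hA.map_eq hab] at h
  rw [← h]
  unfold qval
  split
  · exact integral_bernoulliReal (by linarith) hp1
  · exact integral_bernoulliReal (by linarith) (by linarith)

lemma IsSBM.key (hA : IsSBM μ N p A) (hp : 1 / 2 < p) (hp1 : p ≤ 1)
    {a b c : Fin (2 * N)} (hab : a ≠ b) (hac : a ≠ c) (hbc : b ≠ c) :
    ∫ ω, A ω a b * (A ω a c * A ω c b) ∂μ
      = qval N p a b * (qval N p a c * qval N p c b) := by
  classical
  set f : {e : Fin (2 * N) × Fin (2 * N) // e.1 < e.2} → Ω → ℝ :=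
    fun e ω => A ω e.1.1 e.1.2 with hf
  have hed : ∀ (x y : Fin (2 * N)) (h : x ≠ y), x ⊓ y < x ⊔ y := fun x y h => min_lt_max.2 h
  let e1 : {e : Fin (2 * N) × Fin (2 * N) // e.1 < e.2} := ⟨(a ⊓ b, a ⊔ b), hed a b hab⟩
  let e2 : {e : Fin (2 * N) × Fin (2 * N) // e.1 < e.2} := ⟨(a ⊓ c, a ⊔ c), hed a c hac⟩
  let e3 : {e : Fin (2 * N) × Fin (2 * N) // e.1 < e.2} := ⟨(c ⊓ b, c ⊔ b), hed c b hbc.symm⟩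
  have hfe : ∀ (x y : Fin (2 * N)), ∀ ω, A ω (x ⊓ y) (x ⊔ y) = A ω x y := by
    intro x y ω
    rcases le_total x y with h | h
    · rw [inf_eq_left.2 h, sup_eq_right.2 h]
    · rw [inf_eq_right.2 h, sup_eq_left.2 h, hA.comm]
  have hqe : ∀ (x y : Fin (2 * N)), qval N p (x ⊓ y) (x ⊔ y) = qval N p x y := by
    intro x y
    rcases le_total x y with h | h
    · rw [inf_eq_left.2 h, sup_eq_right.2 h]
    · rw [inf_eq_right.2 h, sup_eq_left.2 h]
      unfold qval sameCom
      exact if_congr Iff.comm rfl rfl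
  have hexp : ∀ (x y : Fin (2 * N)) (h : x ≠ y),
      ∫ ω, A ω (x ⊓ y) (x ⊔ y) ∂μ = qval N p x y := by
    intro x y h
    have : (fun ω => A ω (x ⊓ y) (x ⊔ y)) = fun ω => A ω x y := funext fun ω => hfe x y ω
    rw [this, hA.exp_entry hp hp1 h]
  have h12 : e1 ≠ e2 := by
    intro h
    have h' := Subtype.ext_iff.1 h
    have h1 : a ⊓ b = a ⊓ c := congrArg Prod.fst h'
    have h2 : a ⊔ b = a ⊔ c := congrArg Prod.snd h'
    rcases pairEq h1 h2 with ⟨_, h⟩ | ⟨h, h'⟩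
    · exact hbc h
    · exact hac h
  have h13 : e1 ≠ e3 := by
    intro h
    have h' := Subtype.ext_iff.1 h
    have h1 : a ⊓ b = c ⊓ b := congrArg Prod.fst h'
    have h2 : a ⊔ b = c ⊔ b := congrArg Prod.snd h'
    rcases pairEq h1 h2 with ⟨h, _⟩ | ⟨h, _⟩
    · exact hac h
    · exact hab h
  have h23 : e2 ≠ e3 := by
    intro h
    have h' := Subtype.ext_iff.1 h
    have h1 : a ⊓ c = c ⊓ b := congrArg Prod.fst h'
    have h2 : a ⊔ c = c ⊔ b := congrArg Prod.snd h'
    rcases pairEq h1 h2 with ⟨h, _⟩ | ⟨h, _⟩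
    · exact hac h
    · exact hab h
  have hmeasf : ∀ e, Measurable (f e) := fun e => hA.meas _ _
  have hprod : ∏ e ∈ ({e2, e3} : Finset _), f e = f e2 * f e3 := Finset.prod_pair h23
  have hindep1 : IndepFun (f e1) (f e2 * f e3) μ := by
    have := hA.indep.indepFun_finsetProd_of_notMem hmeasf
      (s := {e2, e3}) (i := e1) (by simp [h12, h13])
    rw [hprod] at this
    exact this.symm
  have hindep23 : IndepFun (f e2) (f e3) μ := hA.indep.indepFun h23
  have heq : (fun ω => A ω a b * (A ω a c * A ω c b))
      = f e1 * (f e2 * f e3) := by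
    funext ω
    simp only [Pi.mul_apply, hf, e1, e2, e3]
    rw [hfe, hfe, hfe]
  rw [heq, hindep1.integral_mul_eq_mul_integral (hmeasf e1).aestronglyMeasurable
      ((hmeasf e2).mul (hmeasf e3)).aestronglyMeasurable,
    hindep23.integral_mul_eq_mul_integral (hmeasf e2).aestronglyMeasurable (hmeasf e3).aestronglyMeasurable]
  have g1 : ∫ ω, f e1 ω ∂μ = qval N p a b := hexp a b hab
  have g2 : ∫ ω, f e2 ω ∂μ = qval N p a c := hexp a c hac
  have g3 : ∫ ω, f e3 ω ∂μ = qval N p c b := hexp c b hbc.symm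
  rw [g1, g2, g3]

end SBM

theorem stmt12 {Ω : Type*} [MeasurableSpace Ω] (μ : Measure Ω) (N : ℕ) (hN : 1 ≤ N)
    (p : ℝ) (hp : 1 / 2 < p) (hp1 : p ≤ 1)
    (A : Ω → Matrix (Fin (2 * N)) (Fin (2 * N)) ℝ) (hA : IsSBM μ N p A)
    (i j : Fin (2 * N)) (hij : i ≠ j) :
    (sameCom N i j →
      (∫ ω, A ω i j * ((A ω) ^ 2) i j ∂μ) =
        p * ((N : ℝ) * (1 - 2 * p + 2 * p ^ 2) - 2 * p ^ 2)) ∧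
    (¬ sameCom N i j →
      (∫ ω, A ω i j * ((A ω) ^ 2) i j ∂μ) = 2 * ((N : ℝ) - 1) * p * (1 - p) ^ 2) := by
  classical
  have hP := hA.isProb
  set iv : ℕ := (i : ℕ) with hiv
  set jv : ℕ := (j : ℕ) with hjv
  have hivjv : iv ≠ jv := fun h => hij (Fin.ext h)
  have hivlt : iv ∈ Finset.range (2 * N) := Finset.mem_range.2 i.isLt
  have hjvlt : jv ∈ Finset.range (2 * N) := Finset.mem_range.2 j.isLt
  set F : ℕ → ℝ := fun k =>
    if k = iv ∨ k = jv then 0 else Qv N p iv jv * (Qv N p iv k * Qv N p k jv) with hF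
  set G : ℕ → ℝ := fun k => Qv N p iv jv * (Qv N p iv k * Qv N p k jv) with hG
  -- Step 1: reduce the integral to a finite sum.
  have hint : (∫ ω, A ω i j * ((A ω) ^ 2) i j ∂μ)
      = ∑ k : Fin (2 * N), ∫ ω, A ω i j * (A ω i k * A ω k j) ∂μ := by
    rw [← integral_finset_sum]
    · congr 1
      funext ω
      rw [pow_two, Matrix.mul_apply, Finset.mul_sum]
    · intro k _
      refine (integrable_const (1 : ℝ)).mono'
        ((hA.meas i j).mul ((hA.meas i k).mul (hA.meas k j))).aestronglyMeasurable
        (ae_of_all _ ?_)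
      intro ω
      rcases hA.vals ω i j with h1 | h1 <;> rcases hA.vals ω i k with h2 | h2 <;>
        rcases hA.vals ω k j with h3 | h3 <;>
        simp [h1, h2, h3]
  have hterm : ∀ k : Fin (2 * N), (∫ ω, A ω i j * (A ω i k * A ω k j) ∂μ) = F (k : ℕ) := by
    intro k
    by_cases hk : k = i ∨ k = j
    · have hk' : (k : ℕ) = iv ∨ (k : ℕ) = jv := by
        rcases hk with h | h <;> [left; right] <;> rw [h]
      rw [hF]
      simp only [hk', if_pos]
      rcases hk with rfl | rfl
      · simp [hA.diag]
      · simp [hA.diag]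
    · push_neg at hk
      have hk' : ¬ ((k : ℕ) = iv ∨ (k : ℕ) = jv) := by
        rintro (h | h)
        · exact hk.1 (Fin.ext h)
        · exact hk.2 (Fin.ext h)
      rw [hF]
      simp only [hk', if_neg, not_false_iff]
      rw [hA.key hp hp1 hij (fun h => hk.1 h.symm) (fun h => hk.2 h.symm)]
      rw [qval_eq_Qv, qval_eq_Qv, qval_eq_Qv]
  have hsum : (∫ ω, A ω i j * ((A ω) ^ 2) i j ∂μ) = ∑ k ∈ Finset.range (2 * N), F k := by
    rw [hint, Finset.sum_congr rfl fun k _ => hterm k, Fin.sum_univ_eq_sum_range]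
  -- Step 2: rewrite F as G minus corrections.
  have hFG : ∀ k, F k = G k - (if k = iv then G k else 0) - (if k = jv then G k else 0) := by
    intro k
    by_cases h1 : k = iv
    · subst h1
      simp [hF, hG, hivjv]
    · by_cases h2 : k = jv
      · subst h2
        simp [hF, hG, h1]
      · simp [hF, hG, h1, h2]
  have hsumFG : ∑ k ∈ Finset.range (2 * N), F k
      = (∑ k ∈ Finset.range (2 * N), G k) - G iv - G jv := by
    simp_rw [hFG]
    rw [Finset.sum_sub_distrib, Finset.sum_sub_distrib, Finset.sum_ite_eq' _ iv G,
      Finset.sum_ite_eq' _ jv G, if_pos hivlt, if_pos hjvlt]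
  -- Step 3: split the sum over the two communities.
  have hsplit : ∑ k ∈ Finset.range (2 * N), G k
      = (∑ k ∈ Finset.range N, G k) + ∑ k ∈ Finset.range N, G (N + k) := by
    rw [two_mul, Finset.sum_range_add]
  rw [hsum, hsumFG, hsplit]
  have hNk : ∀ k ∈ Finset.range N, k < N := fun k hk => Finset.mem_range.mp hk
  have hNk' : ∀ k ∈ Finset.range N, ¬ (N + k < N) := fun k _ => by omega
  constructor
  · intro hsame
    have hsame' : (iv < N ↔ jv < N) := hsame
    by_cases hi : iv < N
    · have hj : jv < N := hsame'.1 hi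
      have c1 : ∑ k ∈ Finset.range N, G k = (N : ℝ) * (p * (p * p)) := by
        have hc : ∀ k ∈ Finset.range N, G k = (p * (p * p)) := by
          intro k hk
          have := hNk k hk
          simp [hG, Qv, hi, hj, this, le_of_not_gt, not_le_of_gt]
        rw [Finset.sum_congr rfl hc, Finset.sum_const, nsmul_eq_mul, Finset.card_range]
      have c2 : ∑ k ∈ Finset.range N, G (N + k) = (N : ℝ) * (p * ((1 - p) * (1 - p))) := by
        have hc : ∀ k ∈ Finset.range N, G (N + k) = (p * ((1 - p) * (1 - p))) := by
          intro k hk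
          have := hNk' k hk
          simp [hG, Qv, hi, hj, this, le_of_not_gt, not_le_of_gt]
        rw [Finset.sum_congr rfl hc, Finset.sum_const, nsmul_eq_mul, Finset.card_range]
      have c3 : G iv = p * (p * p) := by simp [hG, Qv, hi, hj, le_of_not_gt, not_le_of_gt]
      have c4 : G jv = p * (p * p) := by simp [hG, Qv, hi, hj, le_of_not_gt, not_le_of_gt]
      rw [c1, c2, c3, c4]; ring
    · have hj : ¬ jv < N := fun h => hi (hsame'.2 h)
      have c1 : ∑ k ∈ Finset.range N, G k = (N : ℝ) * (p * ((1 - p) * (1 - p))) := by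
        have hc : ∀ k ∈ Finset.range N, G k = (p * ((1 - p) * (1 - p))) := by
          intro k hk
          have := hNk k hk
          simp [hG, Qv, hi, hj, this, le_of_not_gt, not_le_of_gt]
        rw [Finset.sum_congr rfl hc, Finset.sum_const, nsmul_eq_mul, Finset.card_range]
      have c2 : ∑ k ∈ Finset.range N, G (N + k) = (N : ℝ) * (p * (p * p)) := by
        have hc : ∀ k ∈ Finset.range N, G (N + k) = (p * (p * p)) := by
          intro k hk
          have := hNk' k hk
          simp [hG, Qv, hi, hj, this, le_of_not_gt, not_le_of_gt]
        rw [Finset.sum_congr rfl hc, Finset.sum_const, nsmul_eq_mul, Finset.card_range]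
      have c3 : G iv = p * (p * p) := by simp [hG, Qv, hi, hj, le_of_not_gt, not_le_of_gt]
      have c4 : G jv = p * (p * p) := by simp [hG, Qv, hi, hj, le_of_not_gt, not_le_of_gt]
      rw [c1, c2, c3, c4]; ring
  · intro hdiff
    have hdiff' : ¬ (iv < N ↔ jv < N) := hdiff
    by_cases hi : iv < N
    · have hj : ¬ jv < N := fun h => hdiff' ⟨fun _ => h, fun _ => hi⟩
      have c1 : ∑ k ∈ Finset.range N, G k = (N : ℝ) * ((1 - p) * (p * (1 - p))) := by
        have hc : ∀ k ∈ Finset.range N, G k = ((1 - p) * (p * (1 - p))) := by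
          intro k hk
          have := hNk k hk
          simp [hG, Qv, hi, hj, this, le_of_not_gt, not_le_of_gt]
        rw [Finset.sum_congr rfl hc, Finset.sum_const, nsmul_eq_mul, Finset.card_range]
      have c2 : ∑ k ∈ Finset.range N, G (N + k)
          = (N : ℝ) * ((1 - p) * ((1 - p) * p)) := by
        have hc : ∀ k ∈ Finset.range N, G (N + k) = ((1 - p) * ((1 - p) * p)) := by
          intro k hk
          have := hNk' k hk
          simp [hG, Qv, hi, hj, this, le_of_not_gt, not_le_of_gt]
        rw [Finset.sum_congr rfl hc, Finset.sum_const, nsmul_eq_mul, Finset.card_range]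
      have c3 : G iv = (1 - p) * (p * (1 - p)) := by simp [hG, Qv, hi, hj, le_of_not_gt, not_le_of_gt]
      have c4 : G jv = (1 - p) * ((1 - p) * p) := by simp [hG, Qv, hi, hj, le_of_not_gt, not_le_of_gt]
      rw [c1, c2, c3, c4]; ring
    · have hj : jv < N := by
        by_contra hj
        exact hdiff' ⟨fun h => absurd h hi, fun h => absurd h hj⟩
      have c1 : ∑ k ∈ Finset.range N, G k = (N : ℝ) * ((1 - p) * ((1 - p) * p)) := by
        have hc : ∀ k ∈ Finset.range N, G k = ((1 - p) * ((1 - p) * p)) := by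
          intro k hk
          have := hNk k hk
          simp [hG, Qv, hi, hj, this, le_of_not_gt, not_le_of_gt]
        rw [Finset.sum_congr rfl hc, Finset.sum_const, nsmul_eq_mul, Finset.card_range]
      have c2 : ∑ k ∈ Finset.range N, G (N + k)
          = (N : ℝ) * ((1 - p) * (p * (1 - p))) := by
        have hc : ∀ k ∈ Finset.range N, G (N + k) = ((1 - p) * (p * (1 - p))) := by
          intro k hk
          have := hNk' k hk
          simp [hG, Qv, hi, hj, this, le_of_not_gt, not_le_of_gt]
        rw [Finset.sum_congr rfl hc, Finset.sum_const, nsmul_eq_mul, Finset.card_range]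
      have c3 : G iv = (1 - p) * (p * (1 - p)) := by simp [hG, Qv, hi, hj, le_of_not_gt, not_le_of_gt]
      have c4 : G jv = (1 - p) * ((1 - p) * p) := by simp [hG, Qv, hi, hj, le_of_not_gt, not_le_of_gt]
      rw [c1, c2, c3, c4]; ring
end
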